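/- Fix θ > 0, an integer K ≥ 1 and m ∈ ℕ^K. The explicit coefficients p_{m,n}(t), 0 ≤ n ≤ m, satisfy: (i) p_{m,m}(0) = 1 and p_{m,n}(0) = 0 for every n ≠ m with n ≤ m; (ii) for every t ≥ 0 and every 0 ≤ n ≤ m, the function t ↦ p_{m,n}(t) is differentiable with d/dt p_{m,n}(t) = ((θ+|n|)/2) ∑_{i=1}^K (n_i + 1) p_{m, n+e_i}(t) − λ_{|n|} p_{m,n}(t), where p_{m,n+e_i}(t) := 0 whenever n+e_i ≤ m fails. These are the Kolmogorov forward equations of the pure-death process on ℕ^K which jumps from m' to m'−e_i at rate m'_i(θ+|m'|−1)/2, identifying p_{m,n}(t) as its transition probabilities (Lemma A.1). -/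

import Mathlib

open Finset

/-- The death-process rates `λₙ = n(θ + n - 1)/2`. -/
noncomputable def lam (θ : ℝ) (n : ℕ) : ℝ := n * (θ + n - 1) / 2

/-- The coefficient `C_{M, M - i}(t)`. -/
noncomputable def Ccoef (θ : ℝ) (M i : ℕ) (t : ℝ) : ℝ :=
  (-1 : ℝ) ^ i * ∑ k ∈ Finset.range (i + 1),
    Real.exp (-(lam θ (M - k)) * t) /
      ∏ h ∈ (Finset.range (i + 1)).erase k, (lam θ (M - k) - lam θ (M - h))

/-- The multivariate hypergeometric weight `p(i; m, |i|)`. -/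
noncomputable def hyp {K : ℕ} (m i : Fin K → ℕ) : ℝ :=
  ((∑ j, m j).choose (∑ j, i j) : ℝ)⁻¹ * ∏ j, ((m j).choose (i j) : ℝ)

/-- The explicit death-process transition coefficient `p_{m, m - i}(t)`. -/
noncomputable def pcoef (θ : ℝ) {K : ℕ} (m i : Fin K → ℕ) (t : ℝ) : ℝ :=
  if i = 0 then Real.exp (-(lam θ (∑ j, m j)) * t)
  else Ccoef θ (∑ j, m j) (∑ j, i j) t *
    (∏ h ∈ Finset.range (∑ j, i j), lam θ ((∑ j, m j) - h)) * hyp m i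

/-- The transition coefficient `p_{m,n}(t)`, set to `0` when `n ≤ m` fails. -/
noncomputable def q (θ : ℝ) {K : ℕ} (m n : Fin K → ℕ) (t : ℝ) : ℝ :=
  if ∀ i, n i ≤ m i then pcoef θ m (m - n) t else 0

section Aux

open Polynomial

lemma lead_basis {F : Type*} [Field F] {ι : Type*} [DecidableEq ι] {s : Finset ι} {v : ι → F}
    (hvs : Set.InjOn v s) {i : ι} (hi : i ∈ s) :
    (Lagrange.basis s v i).coeff (s.card - 1) = ∏ j ∈ s.erase i, (v i - v j)⁻¹ := by
  have hd : (Lagrange.basis s v i).natDegree = s.card - 1 := Lagrange.natDegree_basis hvs hi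
  rw [← hd, Polynomial.coeff_natDegree, Lagrange.basis, Polynomial.leadingCoeff_prod]
  refine Finset.prod_congr rfl fun j hj => ?_
  rw [Lagrange.basisDivisor, leadingCoeff_mul, leadingCoeff_C, leadingCoeff_X_sub_C, mul_one]

lemma sum_prod_inv_eq_zero {F : Type*} [Field F] {ι : Type*} [DecidableEq ι] {s : Finset ι}
    {v : ι → F} (hvs : Set.InjOn v s) (hs : 2 ≤ s.card) :
    ∑ i ∈ s, ∏ j ∈ s.erase i, (v i - v j)⁻¹ = 0 := by
  have h1 : ∑ j ∈ s, Lagrange.basis s v j = 1 :=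
    Lagrange.sum_basis hvs (Finset.card_pos.mp (by omega))
  have := congrArg (fun p : F[X] => p.coeff (s.card - 1)) h1
  simp only [Polynomial.finset_sum_coeff] at this
  rw [Finset.sum_congr rfl fun i hi => lead_basis hvs hi] at this
  rwa [Polynomial.coeff_one, if_neg (by omega)] at this

lemma lam_lt {θ : ℝ} (hθ : 0 < θ) {a b : ℕ} (h : a < b) : lam θ a < lam θ b := by
  unfold lam
  have h1 : (a : ℝ) + 1 ≤ b := by exact_mod_cast h
  have h0 : (0:ℝ) ≤ a := Nat.cast_nonneg a
  nlinarith [h1, h0, hθ]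

lemma lam_injOn {θ : ℝ} (hθ : 0 < θ) {M I : ℕ} (hIM : I ≤ M) :
    Set.InjOn (fun k => lam θ (M - k)) (Finset.range (I + 1)) := by
  intro a ha b hb hab
  simp only [Finset.coe_range, Set.mem_Iio] at ha hb
  by_contra hne
  rcases Nat.lt_or_ge a b with h | h
  · have : M - b < M - a := by omega
    exact absurd hab (ne_of_gt (lam_lt hθ this))
  · have hba : b < a := by omega
    have : M - a < M - b := by omega
    exact absurd hab.symm (ne_of_gt (lam_lt hθ this))

lemma Ccoef_zero {θ : ℝ} (hθ : 0 < θ) {M I : ℕ} (hI : 1 ≤ I) (hIM : I ≤ M) :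
    Ccoef θ M I 0 = 0 := by
  unfold Ccoef
  have h1 : ∀ k ∈ Finset.range (I + 1),
      Real.exp (-(lam θ (M - k)) * 0) /
          ∏ h ∈ (Finset.range (I + 1)).erase k, (lam θ (M - k) - lam θ (M - h))
        = ∏ h ∈ (Finset.range (I + 1)).erase k, (lam θ (M - k) - lam θ (M - h))⁻¹ := by
    intro k _
    rw [mul_zero, Real.exp_zero, one_div, ← Finset.prod_inv_distrib]
  rw [Finset.sum_congr rfl h1]
  have := sum_prod_inv_eq_zero (lam_injOn hθ hIM) (by rw [Finset.card_range]; omega)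
  rw [this, mul_zero]

lemma Ccoef_hasDerivAt {θ : ℝ} (hθ : 0 < θ) {M I : ℕ} (hI : 1 ≤ I) (hIM : I ≤ M) (t : ℝ) :
    HasDerivAt (fun u => Ccoef θ M I u)
      (Ccoef θ M (I - 1) t - lam θ (M - I) * Ccoef θ M I t) t := by
  set y : ℕ → ℝ := fun k => lam θ (M - k) with hy
  set e : ℕ → ℝ := fun k => Real.exp (-(y k) * t) with he
  set d : ℕ → ℝ := fun k => ∏ h ∈ (Finset.range (I + 1)).erase k, (y k - y h) with hd
  set d' : ℕ → ℝ := fun k => ∏ h ∈ (Finset.range I).erase k, (y k - y h) with hd'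
  have hI1 : I - 1 + 1 = I := by omega
  have hCe : Ccoef θ M I t = (-1 : ℝ) ^ I * ∑ k ∈ Finset.range (I + 1), e k / d k := rfl
  have hCe' : Ccoef θ M (I - 1) t = (-1 : ℝ) ^ (I - 1) * ∑ k ∈ Finset.range I, e k / d' k := by
    unfold Ccoef; rw [hI1]
  have hderiv : HasDerivAt (fun u => Ccoef θ M I u)
      ((-1 : ℝ) ^ I * ∑ k ∈ Finset.range (I + 1), (-(y k) * e k) / d k) t := by
    unfold Ccoef
    refine HasDerivAt.const_mul _ (HasDerivAt.fun_sum fun k _ => ?_)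
    have h1 : HasDerivAt (fun u : ℝ => -(y k) * u) (-(y k)) t := by
      simpa using (hasDerivAt_id t).const_mul (-(y k))
    have h3 := ((Real.hasDerivAt_exp (-(y k) * t)).comp t h1).div_const (d k)
    have h4 : Real.exp (-(y k) * t) * -(y k) / d k = -(y k) * e k / d k := by
      rw [he]; ring
    rw [h4] at h3
    exact h3
  convert hderiv using 1
  have hsplit : ∀ k ∈ Finset.range (I + 1),
      (-(y k) * e k) / d k = ((y I - y k) * e k) / d k + -(y I) * (e k / d k) := by
    intro k _
    rw [← mul_div_assoc, ← add_div]
    congr 1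
    ring
  rw [Finset.sum_congr rfl hsplit, Finset.sum_add_distrib, mul_add, ← Finset.mul_sum]
  have hA : (-1 : ℝ) ^ I * ∑ k ∈ Finset.range (I + 1), ((y I - y k) * e k) / d k
      = Ccoef θ M (I - 1) t := by
    have hIr : I ∉ Finset.range I := by simp
    rw [Finset.range_add_one, Finset.sum_insert hIr]
    have hzero : ((y I - y I) * e I) / d I = 0 := by simp
    rw [hzero, zero_add]
    have hterm : ∀ k ∈ Finset.range I,
        ((y I - y k) * e k) / d k = -(e k / d' k) := by
      intro k hk
      have hkI : I ≠ k := by simp at hk; omega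
      have hdk : d k = (y k - y I) * d' k := by
        rw [hd, hd']
        simp only
        rw [Finset.range_add_one, Finset.erase_insert_of_ne hkI,
          Finset.prod_insert (by simp)]
      have hne : y k - y I ≠ 0 := by
        have hk' : k < I := Finset.mem_range.mp hk
        have : y I < y k := lam_lt hθ (by omega)
        linarith
      rw [hdk]
      have h5 : (y I - y k) * e k = -((y k - y I) * e k) := by ring
      rw [h5, neg_div, mul_div_mul_left _ _ hne]
    rw [Finset.sum_congr rfl hterm, hCe']
    have hpow : (-1 : ℝ) ^ I = (-1 : ℝ) ^ (I - 1) * (-1) := by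
      conv_lhs => rw [← hI1]; rw [pow_succ]
    rw [hpow, Finset.sum_neg_distrib]
    ring
  rw [hA, hCe]
  ring

lemma sum_sub_pi {K : ℕ} {a b : Fin K → ℕ} (h : b ≤ a) :
    ∑ j, (a - b) j = ∑ j, a j - ∑ j, b j := by
  simpa [Pi.sub_apply] using Finset.sum_tsub_distrib Finset.univ (fun x _ => h x)

lemma add_single_le {K : ℕ} {m n : Fin K → ℕ} (hn : n ≤ m) {j : Fin K} (hj : n j < m j) :
    n + Pi.single j 1 ≤ m := by
  intro l
  by_cases hlj : l = j
  · subst hlj; simpa [Pi.add_apply] using hj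
  · simpa [Pi.add_apply, Pi.single_apply, hlj] using hn l

lemma sum_single_add {K : ℕ} (n : Fin K → ℕ) (j : Fin K) :
    ∑ l : Fin K, (n + Pi.single j 1 : Fin K → ℕ) l = (∑ l, n l) + 1 := by
  simp [Pi.add_apply, Finset.sum_add_distrib, Finset.sum_pi_single']

lemma sum_sub_single {K : ℕ} {m n : Fin K → ℕ} (hn : n ≤ m) {j : Fin K} (hj : n j < m j) :
    ∑ l : Fin K, (m - (n + Pi.single j 1) : Fin K → ℕ) l = (∑ l, (m - n) l) - 1 := by
  rw [sum_sub_pi (add_single_le hn hj), sum_single_add, sum_sub_pi hn]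
  have h1 : ∑ l, n l ≤ ∑ l, m l := Finset.sum_le_sum (fun l _ => hn l)
  have h2 : (∑ l, n l) + 1 ≤ ∑ l, m l := by
    have := Finset.sum_lt_sum (fun l (_ : l ∈ Finset.univ) => hn l)
      ⟨j, Finset.mem_univ j, hj⟩
    omega
  omega

lemma hyp_step {K : ℕ} {m n : Fin K → ℕ} (hn : n ≤ m) (hne : n ≠ m) :
    ∑ j, ((n j : ℝ) + 1) * (if n j < m j then hyp m (m - (n + Pi.single j 1)) else 0)
      = ((∑ j, n j : ℕ) + 1 : ℝ) * hyp m (m - n) := by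
  classical
  set M := ∑ j, m j with hM
  set N := ∑ j, n j with hN
  have hNM : N < M := by
    obtain ⟨j, hj⟩ : ∃ j, n j < m j := by
      by_contra hc
      push_neg at hc
      exact hne (le_antisymm hn (fun j => hc j))
    exact Finset.sum_lt_sum (fun l _ => hn l) ⟨j, Finset.mem_univ j, hj⟩
  set I := ∑ j, (m - n) j with hI
  have hIe : I = M - N := sum_sub_pi hn
  have hI1 : 1 ≤ I := by omega
  have hIM : I ≤ M := by omega
  have hterm : ∀ j : Fin K,
      ((n j : ℝ) + 1) * (if n j < m j then hyp m (m - (n + Pi.single j 1)) else 0)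
        = ((M.choose (I - 1) : ℝ))⁻¹ * (((m - n) j : ℝ) * ∏ l, ((m l).choose ((m - n) l) : ℝ)) := by
    intro j
    by_cases hj : n j < m j
    · rw [if_pos hj]
      have hsumI : ∑ l : Fin K, (m - (n + Pi.single j 1) : Fin K → ℕ) l = I - 1 :=
        sum_sub_single hn hj
      have happ : ∀ l, (m - (n + Pi.single j 1) : Fin K → ℕ) l
          = if l = j then (m - n) j - 1 else (m - n) l := by
        intro l
        by_cases hlj : l = j
        · subst hlj; simp [Pi.sub_apply, Pi.add_apply, Pi.single_apply]; omega
        · simp [Pi.sub_apply, Pi.add_apply, Pi.single_apply, hlj]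
      have hprod : ∏ l : Fin K, ((m l).choose ((m - (n + Pi.single j 1) : Fin K → ℕ) l) : ℝ)
          = ((m j).choose ((m - n) j - 1) : ℝ) * ∏ l ∈ Finset.univ.erase j,
              ((m l).choose ((m - n) l) : ℝ) := by
        rw [← Finset.mul_prod_erase Finset.univ _ (Finset.mem_univ j)]
        rw [happ j, if_pos rfl]
        congr 1
        refine Finset.prod_congr rfl fun l hl => ?_
        rw [happ l, if_neg (Finset.mem_erase.mp hl).1]
      have hchoose : ((n j : ℝ) + 1) * ((m j).choose ((m - n) j - 1) : ℝ)
          = (((m - n) j : ℝ)) * ((m j).choose ((m - n) j) : ℝ) := by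
        have hij1 : 1 ≤ (m - n) j := by simp [Pi.sub_apply]; omega
        have hnat : (m j).choose (((m - n) j - 1) + 1) * (((m - n) j - 1) + 1)
            = (m j).choose ((m - n) j - 1) * (m j - ((m - n) j - 1)) :=
          Nat.choose_succ_right_eq _ _
        have h1 : ((m - n) j - 1) + 1 = (m - n) j := by omega
        have h2 : m j - ((m - n) j - 1) = n j + 1 := by
          have : (m - n) j = m j - n j := by simp [Pi.sub_apply]
          omega
        rw [h1, h2] at hnat
        have := congrArg (fun x : ℕ => (x : ℝ)) hnat
        push_cast at this
        linarith
      unfold hyp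
      rw [hsumI, hprod, ← hM]
      rw [← Finset.mul_prod_erase Finset.univ (fun l => ((m l).choose ((m - n) l) : ℝ))
        (Finset.mem_univ j)]
      linear_combination ((M.choose (I - 1) : ℝ))⁻¹ *
        (∏ l ∈ Finset.univ.erase j, ((m l).choose ((m - n) l) : ℝ)) * hchoose
    · rw [if_neg hj]
      have : (m - n) j = 0 := by simp [Pi.sub_apply]; omega
      rw [this]
      simp
  rw [Finset.sum_congr rfl (fun j _ => hterm j), ← Finset.mul_sum, ← Finset.sum_mul, ← Nat.cast_sum,
    ← hI]
  unfold hyp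
  rw [← hM, ← hI]
  have hcI : (0 : ℝ) < (M.choose I : ℝ) := by exact_mod_cast Nat.choose_pos hIM
  have hcI1 : (0 : ℝ) < (M.choose (I - 1) : ℝ) := by
    exact_mod_cast Nat.choose_pos (by omega : I - 1 ≤ M)
  have hkey : (I : ℝ) * (M.choose I : ℝ) = ((N : ℝ) + 1) * (M.choose (I - 1) : ℝ) := by
    have hnat : M.choose ((I - 1) + 1) * ((I - 1) + 1) = M.choose (I - 1) * (M - (I - 1)) :=
      Nat.choose_succ_right_eq _ _
    have h1 : (I - 1) + 1 = I := by omega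
    have h2 : M - (I - 1) = N + 1 := by omega
    rw [h1, h2] at hnat
    have := congrArg (fun x : ℕ => (x : ℝ)) hnat
    push_cast at this
    linarith
  field_simp
  linear_combination (∏ x : Fin K, ((m x).choose (m x - n x) : ℝ)) * hkey

lemma pcoef_eq (θ : ℝ) {K : ℕ} (m i : Fin K → ℕ) (t : ℝ) :
    pcoef θ m i t = Ccoef θ (∑ j, m j) (∑ j, i j) t *
      (∏ h ∈ Finset.range (∑ j, i j), lam θ ((∑ j, m j) - h)) * hyp m i := by
  unfold pcoef
  split_ifs with h
  · subst h
    simp [Ccoef, hyp]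
  · rfl

end Aux

/-- The coefficients `p_{m,n}(t)` satisfy the Kolmogorov forward equations of the pure-death
process on `ℕ^K` jumping from `m'` to `m' - eᵢ` at rate `m'ᵢ(θ + |m'| - 1)/2` (Lemma A.1). -/
theorem stmt4 (θ : ℝ) (hθ : 0 < θ) (K : ℕ) (hK : 1 ≤ K) (m : Fin K → ℕ) :
    (q θ m m 0 = 1 ∧ ∀ n : Fin K → ℕ, n ≤ m → n ≠ m → q θ m n 0 = 0) ∧
    ∀ t : ℝ, 0 ≤ t → ∀ n : Fin K → ℕ, n ≤ m →
      HasDerivAt (fun u => q θ m n u)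
        ((θ + ∑ j, (n j : ℝ)) / 2 * ∑ i, ((n i : ℝ) + 1) * q θ m (n + Pi.single i 1) t
          - lam θ (∑ j, n j) * q θ m n t) t := by
  classical
  have hmm : (m - m : Fin K → ℕ) = 0 := by
    funext l; simp
  constructor
  · constructor
    · rw [q, if_pos (fun i => le_refl (m i)), hmm, pcoef, if_pos rfl, mul_zero, Real.exp_zero]
    · intro n hn hne
      have hNM : ∑ j, n j < ∑ j, m j := by
        obtain ⟨j, hj⟩ : ∃ j, n j < m j := by
          by_contra hc
          push_neg at hc
          exact hne (le_antisymm hn (fun j => hc j))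
        exact Finset.sum_lt_sum (fun l _ => hn l) ⟨j, Finset.mem_univ j, hj⟩
      have hIe : ∑ j, (m - n) j = ∑ j, m j - ∑ j, n j := sum_sub_pi hn
      rw [q, if_pos (fun i => hn i), pcoef_eq,
        Ccoef_zero hθ (by omega) (by omega), zero_mul, zero_mul]
  · intro t _ n hn
    by_cases hne : n = m
    · subst hne
      have hq : ∀ u, q θ n n u = Real.exp (-(lam θ (∑ j, n j)) * u) := by
        intro u
        rw [q, if_pos (fun i => le_refl (n i)), hmm, pcoef, if_pos rfl]
      have hq0 : ∀ i : Fin K, q θ n (n + Pi.single i 1) t = 0 := by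
        intro i
        rw [q, if_neg]
        push_neg
        exact ⟨i, by simp [Pi.add_apply]⟩
      have hderiv : HasDerivAt (fun u => q θ n n u)
          (-(lam θ (∑ j, n j)) * Real.exp (-(lam θ (∑ j, n j)) * t)) t := by
        have h1 : HasDerivAt (fun u : ℝ => -(lam θ (∑ j, n j)) * u) (-(lam θ (∑ j, n j))) t := by
          simpa using (hasDerivAt_id t).const_mul (-(lam θ (∑ j, n j)))
        have h2 := (Real.hasDerivAt_exp (-(lam θ (∑ j, n j)) * t)).comp t h1
        have h3 : (fun u => q θ n n u) = fun u => Real.exp (-(lam θ (∑ j, n j)) * u) := by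
          funext u; exact hq u
        rw [h3]
        have h4 : Real.exp (-(lam θ (∑ j, n j)) * t) * -(lam θ (∑ j, n j))
            = -(lam θ (∑ j, n j)) * Real.exp (-(lam θ (∑ j, n j)) * t) := by ring
        rw [h4] at h2
        exact h2
      convert hderiv using 1
      have hz : ∑ i, ((n i : ℝ) + 1) * q θ n (n + Pi.single i 1) t = 0 :=
        Finset.sum_eq_zero fun i _ => by rw [hq0 i, mul_zero]
      rw [hz, mul_zero, hq t]
      ring
    · -- main case : n ≤ m, n ≠ m
      set M := ∑ j, m j with hM
      set N := ∑ j, n j with hN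
      have hNM : N < M := by
        obtain ⟨j, hj⟩ : ∃ j, n j < m j := by
          by_contra hc
          push_neg at hc
          exact hne (le_antisymm hn (fun j => hc j))
        exact Finset.sum_lt_sum (fun l _ => hn l) ⟨j, Finset.mem_univ j, hj⟩
      set I := ∑ j, (m - n) j with hI
      have hIe : I = M - N := sum_sub_pi hn
      have hI1 : 1 ≤ I := by omega
      have hIM : I ≤ M := by omega
      set Λ : ℝ := ∏ h ∈ Finset.range I, lam θ (M - h) with hΛ
      set Λ' : ℝ := ∏ h ∈ Finset.range (I - 1), lam θ (M - h) with hΛ'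
      set H : ℝ := hyp m (m - n) with hH
      have hqfun : (fun u => q θ m n u) = fun u => Ccoef θ M I u * Λ * H := by
        funext u
        rw [q, if_pos (fun i => hn i), pcoef_eq]
      have hderiv : HasDerivAt (fun u => q θ m n u)
          ((Ccoef θ M (I - 1) t - lam θ (M - I) * Ccoef θ M I t) * Λ * H) t := by
        rw [hqfun]
        exact ((Ccoef_hasDerivAt hθ hI1 hIM t).mul_const Λ).mul_const H
      convert hderiv using 1
      -- now the algebraic identification of the derivative
      have hqn : q θ m n t = Ccoef θ M I t * Λ * H := by
        rw [q, if_pos (fun i => hn i), pcoef_eq]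
      have hqterm : ∀ i : Fin K, ((n i : ℝ) + 1) * q θ m (n + Pi.single i 1) t
          = Ccoef θ M (I - 1) t * Λ' *
            (((n i : ℝ) + 1) * (if n i < m i then hyp m (m - (n + Pi.single i 1)) else 0)) := by
        intro i
        by_cases hi : n i < m i
        · rw [if_pos hi]
          have hcond : ∀ l, (n + Pi.single i 1 : Fin K → ℕ) l ≤ m l := add_single_le hn hi
          have hsub : ∑ j, (m - (n + Pi.single i 1) : Fin K → ℕ) j = I - 1 :=
            sum_sub_single hn hi
          rw [q, if_pos hcond, pcoef_eq, hsub, ← hM]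
          ring
        · rw [if_neg hi]
          have : q θ m (n + Pi.single i 1) t = 0 := by
            rw [q, if_neg]
            push_neg
            refine ⟨i, ?_⟩
            simp [Pi.add_apply]
            omega
          rw [this]
          ring
      have hsum : ∑ i, ((n i : ℝ) + 1) * q θ m (n + Pi.single i 1) t
          = Ccoef θ M (I - 1) t * Λ' * (((N : ℝ) + 1) * H) := by
        rw [Finset.sum_congr rfl (fun i _ => hqterm i), ← Finset.mul_sum]
        rw [hyp_step hn hne, ← hN, ← hH]
      rw [hsum, hqn]
      have hMI : M - I = N := by omega
      have hΛsplit : Λ = Λ' * lam θ (N + 1) := by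
        rw [hΛ, hΛ']
        have h1 : I = (I - 1) + 1 := by omega
        conv_lhs => rw [h1]
        rw [Finset.prod_range_succ]
        congr 2
        omega
      have hlamN1 : lam θ (N + 1) = ((N : ℝ) + 1) * (θ + (N : ℝ)) / 2 := by
        unfold lam
        push_cast
        ring
      have hcast : ∑ j, ((n j : ℝ)) = (N : ℝ) := by
        rw [hN]
        push_cast
        rfl
      rw [hMI, hcast, hΛsplit, hlamN1]
      ring
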